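/- Let μ be a finite nonnegative measure on a measurable space, and let L_P ⊆ Ŝ_P ⊆ U_P, L_Q ⊆ Ŝ_Q ⊆ U_Q, and S_P, S_Q be measurable sets with L_P ⊆ S_P ⊆ U_P and L_Q ⊆ S_Q ⊆ U_Q. Then |μ(Ŝ_P ∩ Ŝ_Q) − μ(S_P ∩ S_Q)| ≤ max{ μ(S_P \ L_P) + μ(S_Q \ L_Q), μ(U_P \ S_P) + μ(U_Q \ S_Q) }. -/

import Mathlib

open MeasureTheory

theorem stmt13 {Ω : Type*} [MeasurableSpace Ω] (μ : Measure Ω) [IsFiniteMeasure μ]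
    (LP SP UP SPhat LQ SQ UQ SQhat : Set Ω)
    (hLP : MeasurableSet LP) (hSP : MeasurableSet SP) (hUP : MeasurableSet UP)
    (hSPhat : MeasurableSet SPhat)
    (hLQ : MeasurableSet LQ) (hSQ : MeasurableSet SQ) (hUQ : MeasurableSet UQ)
    (hSQhat : MeasurableSet SQhat)
    (h1 : LP ⊆ SPhat) (h2 : SPhat ⊆ UP) (h3 : LP ⊆ SP) (h4 : SP ⊆ UP)
    (h5 : LQ ⊆ SQhat) (h6 : SQhat ⊆ UQ) (h7 : LQ ⊆ SQ) (h8 : SQ ⊆ UQ) :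
    |(μ (SPhat ∩ SQhat)).toReal - (μ (SP ∩ SQ)).toReal| ≤
      max ((μ (SP \ LP)).toReal + (μ (SQ \ LQ)).toReal)
        ((μ (UP \ SP)).toReal + (μ (UQ \ SQ)).toReal) := by
  have key : ∀ X Y Z W : Set Ω, X ⊆ Y ∪ Z ∪ W →
      (μ X).toReal ≤ (μ Y).toReal + (μ Z).toReal + (μ W).toReal := by
    intro X Y Z W hsub
    have h : μ X ≤ μ Y + μ Z + μ W :=
      (measure_mono hsub).trans ((measure_union_le _ _).trans
        (add_le_add_left (measure_union_le _ _) _))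
    have := ENNReal.toReal_mono (by finiteness) h
    rwa [ENNReal.toReal_add (by finiteness) (by finiteness),
      ENNReal.toReal_add (by finiteness) (by finiteness)] at this
  rw [abs_sub_le_iff]
  constructor
  · refine le_max_of_le_right ?_
    have hk := key (SPhat ∩ SQhat) (SP ∩ SQ) (UP \ SP) (UQ \ SQ) ?_
    · linarith
    · intro x hx
      by_cases hP : x ∈ SP <;> by_cases hQ : x ∈ SQ
      · exact Or.inl (Or.inl ⟨hP, hQ⟩)
      · exact Or.inr ⟨h6 hx.2, hQ⟩
      · exact Or.inl (Or.inr ⟨h2 hx.1, hP⟩)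
      · exact Or.inl (Or.inr ⟨h2 hx.1, hP⟩)
  · refine le_max_of_le_left ?_
    have hk := key (SP ∩ SQ) (SPhat ∩ SQhat) (SP \ LP) (SQ \ LQ) ?_
    · linarith
    · intro x hx
      by_cases hP : x ∈ LP <;> by_cases hQ : x ∈ LQ
      · exact Or.inl (Or.inl ⟨h1 hP, h5 hQ⟩)
      · exact Or.inr ⟨hx.2, hQ⟩
      · exact Or.inl (Or.inr ⟨hx.1, hP⟩)
      · exact Or.inl (Or.inr ⟨hx.1, hP⟩)
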